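/- For every finite digraph H and every positive integer k, if the arc graph δ(H) admits a proper k-colouring then H admits a proper 2^k-colouring; consequently the chromatic number of δ(H) is at least log₂ of the chromatic number of H. -/

import Mathlib

/-- The symmetrization of a digraph: the simple graph in which `u ~ v` iff there is an
arc between them in some direction. -/
def symmG {α : Type} (D : α → α → Prop) : SimpleGraph α where
  Adj u v := u ≠ v ∧ (D u v ∨ D v u)
  symm := ⟨fun u v h => ⟨h.1.symm, h.2.symm⟩⟩
  loopless := ⟨fun u h => h.1 rfl⟩

/-- The arc graph `δ(H)` of a digraph `H`: vertices are the arcs of `H`, with an arc from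
`(u,v)` to `(x,y)` iff `v = x`. -/
def arcRel {α : Type} (D : α → α → Prop)
    (e f : {p : α × α // D p.1 p.2}) : Prop :=
  e.1.2 = f.1.1

/-- The chromatic number of a digraph: the least `k` such that its symmetrization is
properly `k`-colourable. -/
noncomputable def chrNum {α : Type} (D : α → α → Prop) : ℕ :=
  sInf {k : ℕ | (symmG D).Colorable k}

lemma arc_to_vertex {α : Type} (D : α → α → Prop) (k : ℕ)
    (h : (symmG (arcRel D)).Colorable k) : (symmG D).Colorable (2 ^ k) := by
  classical
  obtain ⟨C⟩ := h
  let f : α → Finset (Fin k) := fun v =>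
    Finset.univ.filter (fun c => ∃ w, ∃ h : D v w, C ⟨(v, w), h⟩ = c)
  have key : ∀ u v, (symmG D).Adj u v → f u ≠ f v := by
    have main : ∀ u v, u ≠ v → D u v → f u ≠ f v := by
      intro u v hne hD heq
      have hc : C ⟨(u, v), hD⟩ ∈ f u := by
        simp only [f, Finset.mem_filter, Finset.mem_univ, true_and]
        exact ⟨v, hD, rfl⟩
      rw [heq] at hc
      simp only [f, Finset.mem_filter, Finset.mem_univ, true_and] at hc
      obtain ⟨w, hw, hcw⟩ := hc
      have hadj : (symmG (arcRel D)).Adj ⟨(u, v), hD⟩ ⟨(v, w), hw⟩ := by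
        refine ⟨?_, Or.inl rfl⟩
        intro hcontra
        apply hne
        have := congrArg (fun e => (Subtype.val e).1) hcontra
        exact this
      exact C.valid hadj hcw.symm
    intro u v hadj
    rcases hadj.2 with h | h
    · exact main u v hadj.1 h
    · exact fun he => main v u hadj.1.symm h he.symm
  have Ccol : (symmG D).Coloring (Finset (Fin k)) := ⟨f, fun {u v} h => key u v h⟩
  have := Ccol.colorable
  simpa using this

/-- For every finite digraph `H` and positive integer `k`: if the arc graph `δ(H)` admits
a proper `k`-colouring then `H` admits a proper `2^k`-colouring; consequently the
chromatic number of `δ(H)` is at least `log₂` of the chromatic number of `H`. -/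
theorem arcGraph_colouring {α : Type} [Fintype α] (D : α → α → Prop) (k : ℕ)
    (hk : 0 < k) :
    ((symmG (arcRel D)).Colorable k → (symmG D).Colorable (2 ^ k)) ∧
    Real.logb 2 (chrNum D) ≤ (chrNum (arcRel D) : ℝ) := by
  classical
  refine ⟨arc_to_vertex D k, ?_⟩
  set m := chrNum (arcRel D) with hm
  have hne : {n : ℕ | (symmG (arcRel D)).Colorable n}.Nonempty := by
    haveI : Fintype {p : α × α // D p.1 p.2} := Fintype.ofFinite _
    exact ⟨_, (symmG (arcRel D)).colorable_of_fintype⟩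
  have hmem : (symmG (arcRel D)).Colorable m := Nat.sInf_mem hne
  have hcol : (symmG D).Colorable (2 ^ m) := arc_to_vertex D m hmem
  have hle : chrNum D ≤ 2 ^ m := Nat.sInf_le hcol
  rcases Nat.eq_zero_or_pos (chrNum D) with h0 | hpos
  · rw [h0]
    simp [Real.logb]
  · have h1 : Real.logb 2 (chrNum D) ≤ Real.logb 2 ((2 : ℝ) ^ m) := by
      apply Real.logb_le_logb_of_le (by norm_num) (by exact_mod_cast hpos)
      exact_mod_cast hle
    calc Real.logb 2 (chrNum D) ≤ Real.logb 2 ((2 : ℝ) ^ m) := h1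
      _ = m := by rw [Real.logb_pow]; simp
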